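/- Let e ⊆ V be a finite subset with 2 ≤ |e| ≤ N, let v ∈ e, and let b : V → ℝ. Then the sum, over all (N−1)-tuples (i_2, …, i_N) ∈ e^{N−1} such that every element of e ∖ {v} occurs among i_2, …, i_N, of the products ∏_{k=2}^{N} b(i_k), equals (N−1)! times the coefficient of X^{N−1} in the formal power series exp(b(v)·X) · ∏_{u ∈ e∖{v}} (exp(b(u)·X) − 1) over ℝ. -/

import Mathlib

open Finset PowerSeries

private lemma rescale_exp_prod {V : Type*} [DecidableEq V] (b : V → ℝ) (v : V)
    (S : Finset V) :
    PowerSeries.rescale (b v) (PowerSeries.exp ℝ) *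
      ∏ u ∈ S, PowerSeries.rescale (b u) (PowerSeries.exp ℝ) =
    PowerSeries.rescale (b v + ∑ u ∈ S, b u) (PowerSeries.exp ℝ) := by
  induction S using Finset.induction with
  | empty => simp
  | insert a s hx ih =>
      rw [Finset.prod_insert hx, Finset.sum_insert hx, ← mul_assoc,
        mul_comm (PowerSeries.rescale (b v) (PowerSeries.exp ℝ))
          (PowerSeries.rescale (b a) (PowerSeries.exp ℝ)), mul_assoc, ih,
        PowerSeries.exp_mul_exp_eq_exp_add,
        show b a + (b v + ∑ u ∈ s, b u) = b v + (b a + ∑ u ∈ s, b u) by ring]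

private lemma inner_ie {V : Type*} [DecidableEq V] (T R : Finset V) (hR : R ⊆ T) :
    ∑ S ∈ T.powerset, (if R ⊆ S then ((-1:ℝ))^((T \ S).card) else 0)
      = if R = T then 1 else 0 := by
  rw [← Finset.sum_filter]
  have hbij : ∑ S ∈ T.powerset.filter (fun S => R ⊆ S), ((-1:ℝ))^((T \ S).card)
      = ∑ S' ∈ (T \ R).powerset, ((-1:ℝ))^(S'.card) := by
    refine Finset.sum_nbij' (fun S => T \ S) (fun S' => T \ S') ?_ ?_ ?_ ?_ ?_
    · intro S hS
      simp only [Finset.mem_filter, Finset.mem_powerset] at hS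
      exact Finset.mem_powerset.2 (Finset.sdiff_subset_sdiff le_rfl hS.2)
    · intro S' hS'
      simp only [Finset.mem_powerset] at hS'
      simp only [Finset.mem_filter, Finset.mem_powerset]
      refine ⟨Finset.sdiff_subset, Finset.subset_sdiff.2 ⟨hR, ?_⟩⟩
      exact (Finset.sdiff_disjoint.mono_left hS').symm
    · intro S hS
      simp only [Finset.mem_filter, Finset.mem_powerset] at hS
      exact Finset.sdiff_sdiff_eq_self hS.1
    · intro S' hS'
      simp only [Finset.mem_powerset] at hS'
      exact Finset.sdiff_sdiff_eq_self (hS'.trans Finset.sdiff_subset)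
    · intro S _; rfl
  rw [hbij]
  have : ∑ S' ∈ (T \ R).powerset, ((-1:ℝ))^(S'.card)
      = ((∑ S' ∈ (T \ R).powerset, ((-1:ℤ))^(S'.card) : ℤ) : ℝ) := by push_cast; rfl
  rw [this, Finset.sum_powerset_neg_one_pow_card]
  by_cases h : R = T
  · simp [h]
  · have : T \ R ≠ ∅ := by
      intro hc
      exact h (Finset.Subset.antisymm hR (Finset.sdiff_eq_empty_iff_subset.1 hc))
    simp [h, this]

theorem sum_tail_tuples_eq_coeff (V : Type*) [Fintype V] [DecidableEq V]
    (N : ℕ) (hN : 2 ≤ N) (e : Finset V) (h2 : 2 ≤ e.card) (hcard : e.card ≤ N)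
    (v : V) (hv : v ∈ e) (b : V → ℝ) :
    ∑ j ∈ Finset.univ.filter
        (fun j : Fin (N - 1) → V =>
          (∀ k, j k ∈ e) ∧ ∀ u ∈ e.erase v, ∃ k, j k = u),
      ∏ k, b (j k) =
    ((N - 1).factorial : ℝ) *
      PowerSeries.coeff (R := ℝ) (N - 1)
        (PowerSeries.rescale (b v) (PowerSeries.exp ℝ) *
          ∏ u ∈ e.erase v,
            (PowerSeries.rescale (b u) (PowerSeries.exp ℝ) - 1)) := by
  classical
  set n := N - 1 with hn
  set T := e.erase v with hT
  have hvT : v ∉ T := Finset.notMem_erase v e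
  have hinsert : insert v T = e := Finset.insert_erase hv
  -- RHS expansion
  have hprod : (PowerSeries.rescale (b v) (PowerSeries.exp ℝ)) *
        ∏ u ∈ T, (PowerSeries.rescale (b u) (PowerSeries.exp ℝ) - 1)
      = ∑ S ∈ T.powerset, PowerSeries.C (R := ℝ) ((-1:ℝ)^((T \ S).card)) *
          PowerSeries.rescale (b v + ∑ u ∈ S, b u) (PowerSeries.exp ℝ) := by
    have h1 : ∀ u ∈ T, PowerSeries.rescale (b u) (PowerSeries.exp ℝ) - 1
        = PowerSeries.rescale (b u) (PowerSeries.exp ℝ) + (-1) := fun u _ => by ring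
    rw [Finset.prod_congr rfl h1, Finset.prod_add, Finset.mul_sum]
    refine Finset.sum_congr rfl fun S hS => ?_
    rw [Finset.prod_const, ← rescale_exp_prod]
    have hC : (PowerSeries.C (R := ℝ)) ((-1:ℝ)^((T \ S).card)) = (-1 : PowerSeries ℝ)^((T \ S).card) := by
      rw [map_pow, map_neg, map_one]
    rw [hC]; ring
  have hfac : ((n.factorial : ℝ)) ≠ 0 := by exact_mod_cast n.factorial_pos.ne'
  have hcoeff : ((n.factorial : ℝ)) * PowerSeries.coeff (R := ℝ) n
        ((PowerSeries.rescale (b v) (PowerSeries.exp ℝ)) *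
          ∏ u ∈ T, (PowerSeries.rescale (b u) (PowerSeries.exp ℝ) - 1))
      = ∑ S ∈ T.powerset, (-1:ℝ)^((T \ S).card) * (b v + ∑ u ∈ S, b u)^n := by
    rw [hprod, map_sum, Finset.mul_sum]
    refine Finset.sum_congr rfl fun S hS => ?_
    rw [PowerSeries.coeff_C_mul, PowerSeries.coeff_rescale, PowerSeries.coeff_exp]
    have hmap : (algebraMap ℚ ℝ) (1 / (n.factorial : ℚ)) = 1 / (n.factorial : ℝ) := by
      push_cast; simp
    rw [hmap]
    field_simp
  -- LHS: sums over piFinsets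
  have hW : ∀ t : Finset V, ∑ j ∈ Fintype.piFinset (fun _ : Fin n => t), ∏ k, b (j k)
      = (∑ u ∈ t, b u)^n := by
    intro t
    rw [← Finset.prod_univ_sum]
    simp
  set W : Finset (Fin n → V) := Fintype.piFinset (fun _ : Fin n => e) with hWdef
  set R : (Fin n → V) → Finset V := fun j => T.filter (fun u => ∃ k, j k = u) with hRdef
  have hRsub : ∀ j, R j ⊆ T := fun j => Finset.filter_subset _ _
  have step1 : ∀ S ∈ T.powerset,
      Fintype.piFinset (fun _ : Fin n => insert v S) = W.filter (fun j => R j ⊆ S) := by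
    intro S hS
    rw [Finset.mem_powerset] at hS
    ext j
    simp only [Fintype.mem_piFinset, Finset.mem_filter, hWdef, hRdef]
    constructor
    · intro h
      refine ⟨fun k => ?_, fun u hu => ?_⟩
      · have := h k
        rw [Finset.mem_insert] at this
        rcases this with h' | h'
        · rw [h']; exact hv
        · exact (hinsert ▸ Finset.mem_insert_of_mem (hS h') : j k ∈ e)
      · rw [Finset.mem_filter] at hu
        obtain ⟨huT, k, hk⟩ := hu
        have := h k
        rw [Finset.mem_insert] at this
        rcases this with h' | h'
        · exact absurd (h' ▸ hk ▸ huT) hvT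
        · exact hk ▸ h'
    · rintro ⟨h1, h2⟩ k
      by_cases hkv : j k = v
      · exact Finset.mem_insert.2 (Or.inl hkv)
      · refine Finset.mem_insert.2 (Or.inr (h2 ?_))
        rw [Finset.mem_filter]
        exact ⟨Finset.mem_erase.2 ⟨hkv, h1 k⟩, k, rfl⟩
  -- main inclusion-exclusion computation
  have main : ∑ S ∈ T.powerset, (-1:ℝ)^((T \ S).card) * (b v + ∑ u ∈ S, b u)^n
      = ∑ j ∈ W.filter (fun j => T ⊆ R j), ∏ k, b (j k) := by
    have h1 : ∀ S ∈ T.powerset, (b v + ∑ u ∈ S, b u)^n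
        = ∑ j ∈ W.filter (fun j => R j ⊆ S), ∏ k, b (j k) := by
      intro S hS
      rw [Finset.mem_powerset] at hS
      have hvS : v ∉ S := fun hc => hvT (hS hc)
      rw [← step1 S (Finset.mem_powerset.2 hS), hW, Finset.sum_insert hvS]
    calc ∑ S ∈ T.powerset, (-1:ℝ)^((T \ S).card) * (b v + ∑ u ∈ S, b u)^n
        = ∑ S ∈ T.powerset, ∑ j ∈ W,
            (if R j ⊆ S then (-1:ℝ)^((T \ S).card) else 0) * ∏ k, b (j k) := by
          refine Finset.sum_congr rfl fun S hS => ?_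
          rw [h1 S hS, Finset.mul_sum, Finset.sum_filter]
          refine Finset.sum_congr rfl fun j hj => ?_
          by_cases h : R j ⊆ S <;> simp [h]
      _ = ∑ j ∈ W, (∑ S ∈ T.powerset,
            (if R j ⊆ S then (-1:ℝ)^((T \ S).card) else 0)) * ∏ k, b (j k) := by
          rw [Finset.sum_comm]
          refine Finset.sum_congr rfl fun j hj => ?_
          rw [Finset.sum_mul]
      _ = ∑ j ∈ W, (if R j = T then (1:ℝ) else 0) * ∏ k, b (j k) := by
          refine Finset.sum_congr rfl fun j hj => ?_
          rw [inner_ie T (R j) (hRsub j)]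
      _ = ∑ j ∈ W.filter (fun j => T ⊆ R j), ∏ k, b (j k) := by
          rw [Finset.sum_filter]
          refine Finset.sum_congr rfl fun j hj => ?_
          have : R j = T ↔ T ⊆ R j := ⟨fun h => h ▸ le_rfl,
            fun h => Finset.Subset.antisymm (hRsub j) h⟩
          by_cases h : T ⊆ R j
          · rw [if_pos (this.2 h), if_pos h, one_mul]
          · rw [if_neg (fun hc => h (this.1 hc)), if_neg h, zero_mul]
  -- identify the filters
  have hfilt : Finset.univ.filter
        (fun j : Fin n → V => (∀ k, j k ∈ e) ∧ ∀ u ∈ T, ∃ k, j k = u)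
      = W.filter (fun j => T ⊆ R j) := by
    ext j
    simp only [Finset.mem_filter, Finset.mem_univ, true_and, hWdef, Fintype.mem_piFinset, hRdef]
    constructor
    · rintro ⟨h1, h2⟩
      exact ⟨h1, fun u hu => Finset.mem_filter.2 ⟨hu, h2 u hu⟩⟩
    · rintro ⟨h1, h2⟩
      exact ⟨h1, fun u hu => (Finset.mem_filter.1 (h2 hu)).2⟩
  rw [hfilt, ← main, hcoeff]
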